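/- There exists an absolute constant C > 0 such that the following holds. Let V be a random variable taking values in the nonnegative integers, let B ≥ 1 and t > 0 be real numbers with S := (tB)^{16/15} ≥ 1, and suppose that for every integer k ≥ 1: E[binom(V, k)] ≤ (B / k^{15/16})^k. Then E[(1 + t)^V] ≤ C·(1 + S)·exp(S). -/

import Mathlib

/-- If a nonnegative-integer random variable `V` (with distribution `p`) has binomial
moments `E[binom(V,k)] ≤ (B/k^{15/16})^k`, then with `S = (tB)^{16/15} ≥ 1` one has
`E[(1+t)^V] ≤ C·(1+S)·exp(S)` for an absolute constant `C > 0`. -/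
theorem exponential_moment_from_binomial_moments : ∃ C : ℝ, 0 < C ∧
    ∀ (p : ℕ → ENNReal) (B t : ℝ),
      (∑' n, p n) = 1 → 1 ≤ B → 0 < t →
      1 ≤ (t * B) ^ ((16 : ℝ) / 15) →
      (∀ k : ℕ, 1 ≤ k →
        (∑' n, p n * (n.choose k : ENNReal)) ≤
          ENNReal.ofReal ((B / (k : ℝ) ^ ((15 : ℝ) / 16)) ^ k)) →
      (∑' n, p n * ENNReal.ofReal ((1 + t) ^ n)) ≤
        ENNReal.ofReal (C * (1 + (t * B) ^ ((16 : ℝ) / 15)) *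
          Real.exp ((t * B) ^ ((16 : ℝ) / 15))) := by
  refine ⟨12, by norm_num, ?_⟩
  intro p B t hp hB ht hS hmom
  set S : ℝ := (t * B) ^ ((16 : ℝ) / 15) with hSdef
  have htB : 0 < t * B := mul_pos ht (lt_of_lt_of_le one_pos hB)
  have hS0 : 0 < S := lt_of_lt_of_le one_pos hS
  have htBS : t * B = S ^ ((15 : ℝ) / 16) := by
    rw [hSdef, ← Real.rpow_mul htB.le]
    norm_num
  -- Step 1: binomial expansion of each term
  have expand : ∀ n : ℕ, ENNReal.ofReal ((1 + t) ^ n)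
      = ∑' k : ℕ, (n.choose k : ENNReal) * ENNReal.ofReal t ^ k := by
    intro n
    have h1 : (1 + t) ^ n = ∑ k ∈ Finset.range (n + 1), t ^ k * (n.choose k : ℝ) := by
      rw [add_comm]
      simpa using add_pow t 1 n
    rw [h1, ENNReal.ofReal_sum_of_nonneg (fun k _ => by positivity),
      tsum_eq_sum (s := Finset.range (n + 1))
        (f := fun k => (n.choose k : ENNReal) * ENNReal.ofReal t ^ k) ?_]
    · refine Finset.sum_congr rfl fun k _ => ?_
      rw [ENNReal.ofReal_mul (by positivity), ENNReal.ofReal_pow ht.le,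
        ENNReal.ofReal_natCast]
      ring
    · intro k hk
      have hk' : n < k := by simpa [Nat.lt_succ_iff, Finset.mem_range, not_lt] using hk
      simp [Nat.choose_eq_zero_of_lt hk']
  -- Step 2: swap the sums
  have swap : (∑' n, p n * ENNReal.ofReal ((1 + t) ^ n))
      = ∑' k : ℕ, ENNReal.ofReal t ^ k * ∑' n, p n * (n.choose k : ENNReal) := by
    calc (∑' n, p n * ENNReal.ofReal ((1 + t) ^ n))
        = ∑' n, ∑' k : ℕ, p n * ((n.choose k : ENNReal) * ENNReal.ofReal t ^ k) := by
          refine tsum_congr fun n => ?_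
          rw [expand n, ← ENNReal.tsum_mul_left]
      _ = ∑' k : ℕ, ∑' n, p n * ((n.choose k : ENNReal) * ENNReal.ofReal t ^ k) :=
          ENNReal.tsum_comm
      _ = ∑' k : ℕ, ENNReal.ofReal t ^ k * ∑' n, p n * (n.choose k : ENNReal) := by
          refine tsum_congr fun k => ?_
          rw [← ENNReal.tsum_mul_left]
          exact tsum_congr fun n => by ring
  set N : ℕ := ⌈2 * S⌉₊ with hNdef
  -- Step 3: pointwise bound on the k-th term
  have key : ∀ k : ℕ, ENNReal.ofReal t ^ k * (∑' n, p n * (n.choose k : ENNReal))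
      ≤ ENNReal.ofReal (S ^ k / k.factorial) + (if k ≤ N then 1 else 0)
        + ENNReal.ofReal ((3 / 4 : ℝ) ^ k) := by
    intro k
    rcases Nat.eq_zero_or_pos k with hk0 | hkpos
    · subst hk0
      simp only [pow_zero, one_mul, Nat.choose_zero_right, Nat.cast_one, mul_one, hp]
      have : (1 : ENNReal) ≤ ENNReal.ofReal (S ^ 0 / Nat.factorial 0) := by
        simp
      calc (1 : ENNReal) ≤ ENNReal.ofReal (S ^ 0 / Nat.factorial 0) := this
        _ ≤ _ := by exact le_add_of_le_of_nonneg (le_add_of_le_of_nonneg le_rfl bot_le) bot_le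
    · have hkR : (0 : ℝ) < (k : ℝ) := by exact_mod_cast hkpos
      have step1 : ENNReal.ofReal t ^ k * (∑' n, p n * (n.choose k : ENNReal))
          ≤ ENNReal.ofReal ((t * (B / (k : ℝ) ^ ((15 : ℝ) / 16))) ^ k) := by
        calc ENNReal.ofReal t ^ k * (∑' n, p n * (n.choose k : ENNReal))
            ≤ ENNReal.ofReal t ^ k *
              ENNReal.ofReal ((B / (k : ℝ) ^ ((15 : ℝ) / 16)) ^ k) :=
              mul_le_mul_right (hmom k hkpos) _
          _ = ENNReal.ofReal ((t * (B / (k : ℝ) ^ ((15 : ℝ) / 16))) ^ k) := by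
              rw [← ENNReal.ofReal_pow ht.le, ← ENNReal.ofReal_mul (by positivity), ← mul_pow]
      have hbase : t * (B / (k : ℝ) ^ ((15 : ℝ) / 16)) = (S / k) ^ ((15 : ℝ) / 16) := by
        rw [Real.div_rpow hS0.le (Nat.cast_nonneg k), ← htBS]
        ring
      rw [hbase] at step1
      have hbnonneg : (0 : ℝ) ≤ (S / k) ^ ((15 : ℝ) / 16) :=
        Real.rpow_nonneg (by positivity) _
      rcases le_or_gt k N with hkN | hkN
      · -- small k: bound by S^k/k! + 1
        have hreal : ((S / k) ^ ((15 : ℝ) / 16)) ^ k ≤ S ^ k / k.factorial + 1 := by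
          rcases le_or_gt (k : ℝ) S with hkS | hkS
          · -- k ≤ S
            have h1 : (1 : ℝ) ≤ S / k := (one_le_div hkR).2 hkS
            have h2 : (S / k) ^ ((15 : ℝ) / 16) ≤ S / k := by
              calc (S / k) ^ ((15 : ℝ) / 16) ≤ (S / k) ^ (1 : ℝ) :=
                    Real.rpow_le_rpow_of_exponent_le h1 (by norm_num)
                _ = S / k := Real.rpow_one _
            have h3 : ((S / k) ^ ((15 : ℝ) / 16)) ^ k ≤ (S / k) ^ k :=
              pow_le_pow_left₀ hbnonneg h2 k
            have h4 : (S / k) ^ k = S ^ k / (k : ℝ) ^ k := div_pow S (k : ℝ) k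
            have h5 : ((k.factorial : ℝ)) ≤ (k : ℝ) ^ k := by
              exact_mod_cast Nat.factorial_le_pow k
            have h6 : S ^ k / (k : ℝ) ^ k ≤ S ^ k / k.factorial := by
              apply div_le_div_of_nonneg_left (by positivity) _ h5
              exact_mod_cast Nat.factorial_pos k
            have : ((S / k) ^ ((15 : ℝ) / 16)) ^ k ≤ S ^ k / k.factorial := by
              rw [← h4] at h6; exact h3.trans h6
            linarith
          · -- S < k
            have h1 : S / k ≤ 1 := (div_le_one hkR).2 hkS.le
            have h2 : (S / k) ^ ((15 : ℝ) / 16) ≤ 1 :=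
              Real.rpow_le_one (by positivity) h1 (by norm_num)
            have h3 : ((S / k) ^ ((15 : ℝ) / 16)) ^ k ≤ 1 := pow_le_one₀ hbnonneg h2
            have h4 : (0 : ℝ) ≤ S ^ k / k.factorial := by positivity
            linarith
        calc ENNReal.ofReal t ^ k * (∑' n, p n * (n.choose k : ENNReal))
            ≤ ENNReal.ofReal (((S / k) ^ ((15 : ℝ) / 16)) ^ k) := step1
          _ ≤ ENNReal.ofReal (S ^ k / k.factorial + 1) := ENNReal.ofReal_le_ofReal hreal
          _ = ENNReal.ofReal (S ^ k / k.factorial) + ENNReal.ofReal 1 :=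
              ENNReal.ofReal_add (by positivity) (by norm_num)
          _ ≤ ENNReal.ofReal (S ^ k / k.factorial) + (if k ≤ N then 1 else 0) := by
              rw [if_pos hkN]
              simp
          _ ≤ _ := le_add_of_le_of_nonneg le_rfl bot_le
      · -- large k: bound by (3/4)^k
        have hk2S : 2 * S < (k : ℝ) := by
          have h1 : 2 * S ≤ (N : ℝ) := Nat.le_ceil _
          have h2 : (N : ℝ) < (k : ℝ) := by exact_mod_cast hkN
          linarith
        have h1 : S / k ≤ 1 / 2 := by
          rw [div_le_div_iff₀ hkR (by norm_num)]
          linarith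
        have h2 : (S / k) ^ ((15 : ℝ) / 16) ≤ (3 / 4 : ℝ) := by
          calc (S / k) ^ ((15 : ℝ) / 16) ≤ ((1 : ℝ) / 2) ^ ((15 : ℝ) / 16) :=
                Real.rpow_le_rpow (by positivity) h1 (by norm_num)
            _ ≤ ((1 : ℝ) / 2) ^ ((1 : ℝ) / 2) :=
                Real.rpow_le_rpow_of_exponent_ge (by norm_num) (by norm_num) (by norm_num)
            _ = Real.sqrt (1 / 2) := (Real.sqrt_eq_rpow _).symm
            _ ≤ Real.sqrt ((3 / 4) ^ 2) := Real.sqrt_le_sqrt (by norm_num)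
            _ = 3 / 4 := Real.sqrt_sq (by norm_num)
        have hreal : ((S / k) ^ ((15 : ℝ) / 16)) ^ k ≤ (3 / 4 : ℝ) ^ k :=
          pow_le_pow_left₀ hbnonneg h2 k
        calc ENNReal.ofReal t ^ k * (∑' n, p n * (n.choose k : ENNReal))
            ≤ ENNReal.ofReal (((S / k) ^ ((15 : ℝ) / 16)) ^ k) := step1
          _ ≤ ENNReal.ofReal ((3 / 4 : ℝ) ^ k) := ENNReal.ofReal_le_ofReal hreal
          _ ≤ _ := le_add_of_nonneg_of_le bot_le le_rfl
  -- Step 4: sum the three parts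
  have hA : (∑' k : ℕ, ENNReal.ofReal (S ^ k / k.factorial))
      = ENNReal.ofReal (Real.exp S) := by
    rw [← ENNReal.ofReal_tsum_of_nonneg (fun k => by positivity)
      (Real.summable_pow_div_factorial S)]
    congr 1
    have := congrFun (NormedSpace.exp_eq_tsum_div (𝔸 := ℝ)) S
    rw [Real.exp_eq_exp_ℝ, this]
  have hI : (∑' k : ℕ, (if k ≤ N then (1 : ENNReal) else 0)) = ((N + 1 : ℕ) : ENNReal) := by
    rw [tsum_eq_sum (s := Finset.range (N + 1)) ?_]
    · rw [Finset.sum_ite_of_true (fun k hk => by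
        simpa [Nat.lt_succ_iff] using Finset.mem_range.1 hk)]
      simp
    · intro k hk
      have : ¬ k ≤ N := by simpa [Finset.mem_range, Nat.lt_succ_iff] using hk
      simp [this]
  have hIle : ((N + 1 : ℕ) : ENNReal) ≤ ENNReal.ofReal (2 * S + 2) := by
    have h1 : ((N : ℝ)) < 2 * S + 1 := Nat.ceil_lt_add_one (by positivity)
    have h2 : ((N + 1 : ℕ) : ℝ) ≤ 2 * S + 2 := by push_cast; linarith
    calc ((N + 1 : ℕ) : ENNReal) = ENNReal.ofReal ((N + 1 : ℕ) : ℝ) :=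
          (ENNReal.ofReal_natCast _).symm
      _ ≤ ENNReal.ofReal (2 * S + 2) := ENNReal.ofReal_le_ofReal h2
  have hG : (∑' k : ℕ, ENNReal.ofReal ((3 / 4 : ℝ) ^ k)) = ENNReal.ofReal 4 := by
    rw [← ENNReal.ofReal_tsum_of_nonneg (fun k => by positivity)
      (summable_geometric_of_lt_one (by norm_num) (by norm_num)),
      tsum_geometric_of_lt_one (by norm_num) (by norm_num)]
    norm_num
  have final : Real.exp S + (2 * S + 2) + 4 ≤ 12 * (1 + S) * Real.exp S := by
    have h1 : (1 : ℝ) ≤ Real.exp S := Real.one_le_exp hS0.le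
    nlinarith [le_mul_of_one_le_right (by linarith : (0:ℝ) ≤ 11 + 12 * S) h1]
  calc (∑' n, p n * ENNReal.ofReal ((1 + t) ^ n))
      = ∑' k : ℕ, ENNReal.ofReal t ^ k * ∑' n, p n * (n.choose k : ENNReal) := swap
    _ ≤ ∑' k : ℕ, (ENNReal.ofReal (S ^ k / k.factorial) + (if k ≤ N then 1 else 0)
          + ENNReal.ofReal ((3 / 4 : ℝ) ^ k)) := ENNReal.tsum_le_tsum key
    _ = (∑' k : ℕ, (ENNReal.ofReal (S ^ k / k.factorial) + (if k ≤ N then 1 else 0)))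
          + ∑' k : ℕ, ENNReal.ofReal ((3 / 4 : ℝ) ^ k) := ENNReal.tsum_add
    _ = (∑' k : ℕ, ENNReal.ofReal (S ^ k / k.factorial))
          + (∑' k : ℕ, (if k ≤ N then (1 : ENNReal) else 0))
          + ∑' k : ℕ, ENNReal.ofReal ((3 / 4 : ℝ) ^ k) := by rw [ENNReal.tsum_add]
    _ ≤ ENNReal.ofReal (Real.exp S) + ENNReal.ofReal (2 * S + 2) + ENNReal.ofReal 4 := by
        exact add_le_add (add_le_add (le_of_eq hA) (hI ▸ hIle)) (le_of_eq hG)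
    _ = ENNReal.ofReal (Real.exp S + (2 * S + 2) + 4) := by
        rw [← ENNReal.ofReal_add (by positivity) (by positivity),
          ← ENNReal.ofReal_add (by positivity) (by norm_num)]
    _ ≤ ENNReal.ofReal (12 * (1 + S) * Real.exp S) := ENNReal.ofReal_le_ofReal final
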